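/- If q ∈ (0,1] satisfies F(q; τ, ν) = q, then the derivative of x ↦ F(x; τ, ν) at x = q is at most 1 − q. -/

import Mathlib

open Set

/-- Let `f : [0,∞) → [0,∞)` be increasing, concave and continuously
differentiable with `f 0 = 0`.  For `τ, ν > 0` let `F(x) = f(τx)/(ν + f(τx))`.
If `q ∈ (0,1]` is a fixed point of `F`, then the derivative of `F` at `q` is
at most `1 − q`. -/
theorem stmt2
    (f : ℝ → ℝ)
    (hf_mono : MonotoneOn f (Ici (0:ℝ)))
    (hf_conc : ConcaveOn ℝ (Ici (0:ℝ)) f)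
    (hf_diff : ContDiff ℝ 1 f)
    (hf_nonneg : ∀ x ≥ (0:ℝ), 0 ≤ f x)
    (hf0 : f 0 = 0)
    (τ ν : ℝ) (hτ : 0 < τ) (hν : 0 < ν)
    (q : ℝ) (hq : q ∈ Ioc (0:ℝ) 1)
    (hfix : f (τ * q) / (ν + f (τ * q)) = q) :
    deriv (fun x => f (τ * x) / (ν + f (τ * x))) q ≤ 1 - q := by
  obtain ⟨hq0, hq1⟩ := hq
  have hτq : 0 < τ * q := mul_pos hτ hq0
  have hfτq : 0 ≤ f (τ * q) := hf_nonneg _ hτq.le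
  have hden : 0 < ν + f (τ * q) := by linarith
  have hdiff : Differentiable ℝ f := hf_diff.differentiable one_ne_zero
  -- q < 1
  have hqlt1 : q < 1 := by
    rw [← hfix, div_lt_one hden]; linarith
  -- fixed point identity: f(τq) = q ν / (1 - q)
  have hfeq : f (τ * q) * (1 - q) = q * ν := by
    have := hfix
    field_simp at this
    nlinarith [this]
  -- derivative of inner function
  have hg : HasDerivAt (fun x => f (τ * x)) (deriv f (τ * q) * τ) q := by
    have h1 : HasDerivAt f (deriv f (τ * q)) (τ * q) := (hdiff (τ * q)).hasDerivAt
    have h2 : HasDerivAt (fun x : ℝ => τ * x) τ q := by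
      simpa using (hasDerivAt_id q).const_mul τ
    exact h1.comp q h2
  -- derivative of F by quotient rule
  have hF : HasDerivAt (fun x => f (τ * x) / (ν + f (τ * x)))
      ((deriv f (τ * q) * τ * (ν + f (τ * q)) - f (τ * q) * (deriv f (τ * q) * τ)) /
        (ν + f (τ * q)) ^ 2) q := by
    exact hg.div (hg.const_add ν) (ne_of_gt hden)
  rw [hF.deriv]
  -- concavity: deriv f (τq) ≤ f(τq)/(τq)
  have hslope : deriv f (τ * q) * (τ * q) ≤ f (τ * q) := by
    have h := hf_conc.deriv_le_slope (x := 0) (y := τ * q) (self_mem_Ici)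
      (mem_Ici.2 hτq.le) hτq (hdiff (τ * q))
    rw [slope_def_field, hf0] at h
    have h2 : deriv f (τ * q) ≤ f (τ * q) / (τ * q) := by simpa using h
    calc deriv f (τ * q) * (τ * q) ≤ f (τ * q) / (τ * q) * (τ * q) :=
          mul_le_mul_of_nonneg_right h2 hτq.le
      _ = f (τ * q) := div_mul_cancel₀ _ (ne_of_gt hτq)
  -- q(ν+g) = g
  have hqg : q * (ν + f (τ * q)) = f (τ * q) := by
    field_simp at hfix; linarith
  rw [div_le_iff₀ (by positivity)]
  nlinarith [hslope, hfeq, hqg, hden, sq_nonneg (ν + f (τ * q)), mul_pos hν hden]
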